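/- The random equilibrium of the logistic equation is an entire solution (formula (3.2)): Let w : ℝ → ℝ be differentiable and assume that s ↦ exp(rs + σ·w(s)) is integrable on (−∞, 0]. Define u(t) := exp(rt + σ·w(t)) / (r·∫_{−∞}^{t} exp(rs + σ·w(s)) ds). Then u(t) > 0 for every t ∈ ℝ, and for every t ∈ ℝ, u is differentiable at t with u'(t) = u(t)·(r − r·u(t)) + σ·u(t)·w'(t); that is, u is a positive solution of the pathwise logistic equation defined for all real time. -/

import Mathlib

open Real Filter Topology MeasureTheory

/-- **The random equilibrium of the logistic equation is an entire solution**
(formula (3.2), pathwise form). If `s ↦ e^{rs + σ w(s)}` is integrable on `(-∞, 0]`,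
then `u(t) = e^{rt + σ w(t)} / (r ∫_{-∞}^t e^{rs + σ w(s)} ds)` is positive and solves
the pathwise logistic equation `u' = u (r - r u) + σ u w'` for every real time `t`. -/
theorem logistic_random_equilibrium_entire_solution
    (r σ : ℝ) (hr : 0 < r)
    (w : ℝ → ℝ) (hw : Differentiable ℝ w)
    (hint : IntegrableOn (fun s => Real.exp (r * s + σ * w s)) (Set.Iic 0))
    (u : ℝ → ℝ)
    (hu : ∀ t : ℝ, u t =
      Real.exp (r * t + σ * w t) /
        (r * ∫ s in Set.Iic t, Real.exp (r * s + σ * w s))) :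
    ∀ t : ℝ, 0 < u t ∧
      HasDerivAt u (u t * (r - r * u t) + σ * u t * deriv w t) t := by
  set f : ℝ → ℝ := fun s => Real.exp (r * s + σ * w s) with hfdef
  have hfc : Continuous f := by
    exact Real.continuous_exp.comp ((continuous_const.mul continuous_id).add (continuous_const.mul hw.continuous))
  have hint' : ∀ a : ℝ, IntegrableOn f (Set.Iic a) := by
    intro a
    rcases le_or_gt a 0 with h | h
    · exact hint.mono_set (Set.Iic_subset_Iic.2 h)
    · have hs : Set.Iic a = Set.Iic 0 ∪ Set.Ioc 0 a := by
        rw [Set.Iic_union_Ioc_eq_Iic h.le]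
      rw [hs]
      exact hint.union (hfc.integrableOn_Ioc)
  set F : ℝ → ℝ := fun a => ∫ s in Set.Iic a, f s with hFdef
  have hFpos : ∀ a : ℝ, 0 < F a := by
    intro a
    refine (setIntegral_pos_iff_support_of_nonneg_ae ?_ (hint' a)).2 ?_
    · filter_upwards with x using (Real.exp_pos _).le
    · have hsupp : Function.support f = Set.univ := by
        ext x; simp [hfdef, Real.exp_ne_zero]
      rw [hsupp, Set.univ_inter, Real.volume_Iic]
      exact ENNReal.zero_lt_top
  -- u is the explicit function
  have hueq : u = fun a => f a / (r * F a) := funext hu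
  intro t
  have hFt : F t ≠ 0 := (hFpos t).ne'
  have hrF : r * F t ≠ 0 := mul_ne_zero hr.ne' hFt
  constructor
  · rw [hu t]
    exact div_pos (Real.exp_pos _) (mul_pos hr (hFpos t))
  -- derivative of f
  have hf' : HasDerivAt f ((r + σ * deriv w t) * f t) t := by
    have hinner : HasDerivAt (fun s => r * s + σ * w s) (r + σ * deriv w t) t := by
      have h1 : HasDerivAt (fun s : ℝ => r * s) r t := by
        simpa using (hasDerivAt_id t).const_mul r
      exact h1.add (((hw t).hasDerivAt).const_mul σ)
    simpa [hfdef, mul_comm] using hinner.exp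
  -- derivative of F
  have hF' : HasDerivAt F (f t) t := by
    have hFsplit : ∀ a : ℝ, F a = F 0 + ∫ s in (0:ℝ)..a, f s := by
      intro a
      have := intervalIntegral.integral_Iic_sub_Iic (hint' 0) (hint' a)
      simp only [hFdef]
      linarith [this]
    have hderiv : HasDerivAt (fun a => F 0 + ∫ s in (0:ℝ)..a, f s) (f t) t := by
      have := intervalIntegral.integral_hasDerivAt_right
        ((hfc.intervalIntegrable 0 t)) (hfc.stronglyMeasurableAtFilter _ _)
        hfc.continuousAt
      simpa using (this.const_add (F 0))
    exact (Filter.EventuallyEq.hasDerivAt_iff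
      (Filter.Eventually.of_forall fun a => (hFsplit a).symm)).mp hderiv
  have hden : HasDerivAt (fun a => r * F a) (r * f t) t := hF'.const_mul r
  have hud : HasDerivAt u
      (((r + σ * deriv w t) * f t * (r * F t) - f t * (r * f t)) / (r * F t) ^ 2) t := by
    rw [hueq]
    exact hf'.div hden hrF
  convert hud using 1
  rw [show u t = f t / (r * F t) from hu t]
  field_simp
  ring
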